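/- Suppose the relatively open polyhedron P̊(a,I,J,K) is nonempty and a, b lie in the same open face of the derived arrangement δA_o. Then P̊(b,I,J,K) is nonempty. -/

import Mathlib

open RealInnerProductSpace

noncomputable section

/-- `ℝ^n` with the Euclidean inner product. -/
abbrev Euc (n : ℕ) := EuclideanSpace ℝ (Fin n)

/-- Standard scalar product on `ℝ^m` (as tuples). -/
def dotm {m : ℕ} (c a : Fin m → ℝ) : ℝ := ∑ i, c i * a i

/-- `C` is a circuit: the family `{u i : i ∈ C}` is linearly dependent but every proper
subfamily is linearly independent. -/
def IsCircuit {n m : ℕ} (u : Fin m → Euc n) (C : Set (Fin m)) : Prop :=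
  ¬ LinearIndependent ℝ (fun i : C => u i) ∧
    ∀ D : Set (Fin m), D ⊂ C → LinearIndependent ℝ (fun i : D => u i)

/-- `c` is a circuit vector: `∑ i, c i • u i = 0` and the support of `c` is a circuit. -/
def IsCircuitVector {n m : ℕ} (u : Fin m → Euc n) (c : Fin m → ℝ) : Prop :=
  (∑ i, c i • u i) = 0 ∧ IsCircuit u {i | c i ≠ 0}

/-- `a` and `b` lie in the same open face of the derived arrangement `δA_o`:
for every circuit vector `c`, `⟨c,a⟩` and `⟨c,b⟩` have the same sign. -/
def SameOpenFace {n m : ℕ} (u : Fin m → Euc n) (a b : Fin m → ℝ) : Prop :=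
  ∀ c : Fin m → ℝ, IsCircuitVector u c →
    SignType.sign (dotm c a) = SignType.sign (dotm c b)

/-- `I, J, K` is a partition of `{1,…,m}` into pairwise disjoint (possibly empty) sets. -/
def IsTripartition {m : ℕ} (I J K : Set (Fin m)) : Prop :=
  I ∪ J ∪ K = Set.univ ∧ Disjoint I J ∧ Disjoint I K ∧ Disjoint J K

/-- The convex polyhedron `P(a,I,J,K)`. -/
def poly {n m : ℕ} (u : Fin m → Euc n) (a : Fin m → ℝ) (I J K : Set (Fin m)) :
    Set (Euc n) :=
  {x | (∀ i ∈ I, ⟪u i, x⟫ = a i) ∧ (∀ j ∈ J, ⟪u j, x⟫ ≤ a j) ∧ (∀ k ∈ K, a k ≤ ⟪u k, x⟫)}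

/-- The normal cone of `P` at `x`. -/
def normalCone {n : ℕ} (P : Set (Euc n)) (x : Euc n) : Set (Euc n) :=
  {v | ∀ y ∈ P, ⟪v, y⟫ ≤ ⟪v, x⟫}

/-- The normal fan of `P`: the family of normal cones at points of `P`. -/
def normalFan {n : ℕ} (P : Set (Euc n)) : Set (Set (Euc n)) :=
  {N | ∃ x ∈ P, N = normalCone P x}

/-- A face of a convex polyhedron: the empty set or an exposed face. -/
def IsFace {n : ℕ} (P F : Set (Euc n)) : Prop :=
  F = ∅ ∨ ∃ v : Euc n, F = {x ∈ P | ∀ y ∈ P, ⟪v, y⟫ ≤ ⟪v, x⟫}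

/-- The set of sign vectors of the parallel translation `A_a`. -/
def signSet {n m : ℕ} (u : Fin m → Euc n) (a : Fin m → ℝ) : Set (Fin m → SignType) :=
  {s | ∃ x : Euc n, ∀ i, s i = SignType.sign (⟪u i, x⟫ - a i)}

/-- The relatively open polyhedron `P̊(a,I,J,K)`. -/
def polyOpen {n m : ℕ} (u : Fin m → Euc n) (a : Fin m → ℝ) (I J K : Set (Fin m)) :
    Set (Euc n) :=
  {x | (∀ i ∈ I, ⟪u i, x⟫ = a i) ∧ (∀ j ∈ J, ⟪u j, x⟫ < a j) ∧ (∀ k ∈ K, a k < ⟪u k, x⟫)}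


section Aux

open Finset

section Cone

variable {E : Type*} [NormedAddCommGroup E] [NormedSpace ℝ E]
variable {ι : Type*} [Fintype ι]

/-- The cone generated by a finite family of vectors. -/
def coneOf (v : ι → E) : Set E :=
  {x | ∃ t : ι → ℝ, (∀ i, 0 ≤ t i) ∧ x = ∑ i, t i • v i}

lemma zero_mem_coneOf (v : ι → E) : (0 : E) ∈ coneOf v :=
  ⟨0, fun _ => le_refl 0, by simp⟩

lemma smul_mem_coneOf {v : ι → E} {x : E} (hx : x ∈ coneOf v) {r : ℝ} (hr : 0 ≤ r) :
    r • x ∈ coneOf v := by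
  obtain ⟨t, ht, rfl⟩ := hx
  exact ⟨fun i => r * t i, fun i => mul_nonneg hr (ht i), by
    simp [Finset.smul_sum, mul_smul]⟩

lemma coneOf_convex (v : ι → E) : Convex ℝ (coneOf v) := by
  rintro x ⟨t, ht, rfl⟩ y ⟨s, hs, rfl⟩ p q hp hq hpq
  refine ⟨fun i => p * t i + q * s i,
    fun i => add_nonneg (mul_nonneg hp (ht i)) (mul_nonneg hq (hs i)), ?_⟩
  simp [Finset.smul_sum, add_smul, mul_smul, Finset.sum_add_distrib]

/-- Carathéodory-type lemma for cones: any element of the cone can be expressed using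
coefficients supported on a linearly independent subfamily. -/
lemma coneOf_caratheodory_aux (v : ι → E) : ∀ N : ℕ, ∀ t : ι → ℝ,
    (Finset.univ.filter fun i => t i ≠ 0).card ≤ N → (∀ i, 0 ≤ t i) →
    ∃ s : Finset ι, LinearIndependent ℝ (fun i : ↥s => v ↑i) ∧
      ∃ t' : ι → ℝ, (∀ i, 0 ≤ t' i) ∧ (∀ i ∉ s, t' i = 0) ∧
        ∑ i, t' i • v i = ∑ i, t i • v i := by
  classical
  intro N
  induction N with
  | zero =>
    intro t hcard ht
    have h0 : ∀ i, t i = 0 := by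
      intro i
      by_contra hi
      have : i ∈ Finset.univ.filter fun i => t i ≠ 0 := by simp [hi]
      have := Finset.card_pos.mpr ⟨i, this⟩
      omega
    refine ⟨∅, ?_, t, ht, fun i _ => h0 i, rfl⟩
    have : IsEmpty ((∅ : Finset ι) : Type _) := by
      simp [Finset.isEmpty_coe_sort]
      exact ⟨fun x => x.2⟩
    exact linearIndependent_empty_type
  | succ N ih =>
    intro t hcard ht
    set s : Finset ι := Finset.univ.filter fun i => t i ≠ 0 with hs
    by_cases hind : LinearIndependent ℝ (fun i : ↥s => v ↑i)
    · exact ⟨s, hind, t, ht, fun i hi => by simpa [hs] using hi, rfl⟩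
    · -- get a dependence relation
      obtain ⟨g, hg0, i₀, hi₀⟩ := Fintype.not_linearIndependent_iff.mp hind
      -- extend to ι
      have key : ∀ d : ι → ℝ, (∀ i, d i ≠ 0 → i ∈ s) → (∑ i, d i • v i = 0) →
          (∃ i, 0 < d i) → ∃ s' : Finset ι, LinearIndependent ℝ (fun i : ↥s' => v ↑i) ∧
          ∃ t' : ι → ℝ, (∀ i, 0 ≤ t' i) ∧ (∀ i ∉ s', t' i = 0) ∧
            ∑ i, t' i • v i = ∑ i, t i • v i := by
        intro d hds hdsum ⟨iP, hiP⟩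
        set P : Finset ι := Finset.univ.filter fun i => 0 < d i with hP
        have hPne : P.Nonempty := ⟨iP, by simp [hP, hiP]⟩
        obtain ⟨i₁, hi₁P, hi₁min⟩ := P.exists_min_image (fun i => t i / d i) hPne
        have hd₁ : 0 < d i₁ := by simpa [hP] using hi₁P
        set θ := t i₁ / d i₁ with hθ
        have hθ0 : 0 ≤ θ := div_nonneg (ht i₁) hd₁.le
        set t'' : ι → ℝ := fun i => t i - θ * d i with ht''
        have ht''0 : ∀ i, 0 ≤ t'' i := by
          intro i
          rcases le_or_gt (d i) 0 with h | h
          · have : θ * d i ≤ 0 := mul_nonpos_of_nonneg_of_nonpos hθ0 h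
            simp only [ht'']; linarith [ht i]
          · have hiP' : i ∈ P := by simp [hP, h]
            have := hi₁min i hiP'
            have : θ * d i ≤ t i := by
              rw [div_le_div_iff₀ hd₁ h] at this
              calc θ * d i = t i₁ / d i₁ * d i := rfl
                _ ≤ t i := by
                  rw [div_mul_eq_mul_div, div_le_iff₀ hd₁]; linarith
            simp only [ht'']; linarith
        have hsum'' : ∑ i, t'' i • v i = ∑ i, t i • v i := by
          simp only [ht'', sub_smul, Finset.sum_sub_distrib, mul_smul]
          rw [← Finset.smul_sum, hdsum, smul_zero, sub_zero]
        have ht''i₁ : t'' i₁ = 0 := by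
          simp only [ht'', hθ]
          field_simp
          ring
        have hcard'' : (Finset.univ.filter fun i => t'' i ≠ 0).card ≤ N := by
          have hsub : (Finset.univ.filter fun i => t'' i ≠ 0) ⊆ s.erase i₁ := by
            intro i hi
            simp only [Finset.mem_filter, Finset.mem_univ, true_and] at hi
            refine Finset.mem_erase.mpr ⟨?_, ?_⟩
            · rintro rfl; exact hi ht''i₁
            · rcases eq_or_ne (d i) 0 with h | h
              · simp only [ht'', h, mul_zero, sub_zero] at hi
                simpa [hs] using hi
              · exact hds i h
          have h1 : (s.erase i₁).card < s.card :=
            Finset.card_erase_lt_of_mem (hds i₁ hd₁.ne')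
          have h2 := Finset.card_le_card hsub
          omega
        obtain ⟨s', hs', t', h1, h2, h3⟩ := ih t'' hcard'' ht''0
        exact ⟨s', hs', t', h1, h2, h3.trans hsum''⟩
      -- build d from g
      set d : ι → ℝ := fun i => if h : i ∈ s then g ⟨i, h⟩ else 0 with hd
      have hds : ∀ i, d i ≠ 0 → i ∈ s := by
        intro i hi
        by_contra h
        simp [hd, h] at hi
      have hdsum : ∑ i, d i • v i = 0 := by
        have : ∑ i, d i • v i = ∑ i ∈ s, d i • v i := by
          refine (Finset.sum_subset (Finset.subset_univ s) ?_).symm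
          intro i _ hi
          simp [hd, hi]
        rw [this, ← Finset.sum_coe_sort s]
        have : ∀ i : ↥s, d ↑i • v ↑i = g i • v ↑i := by
          intro i; simp [hd, i.2]
        rw [Finset.sum_congr rfl (fun i _ => this i)]
        exact hg0
      have hd₀ : d ↑i₀ ≠ 0 := by simp [hd, i₀.2, hi₀]
      rcases lt_or_gt_of_ne hd₀ with h | h
      · -- use -d
        refine key (fun i => -d i) (fun i hi => hds i (by simpa using hi)) ?_ ⟨i₀, show (0:ℝ) < -d ↑i₀ by linarith⟩
        simp only [neg_smul, Finset.sum_neg_distrib, hdsum, neg_zero]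
      · exact key d hds hdsum ⟨i₀, h⟩

lemma coneOf_caratheodory (v : ι → E) {x : E} (hx : x ∈ coneOf v) :
    ∃ s : Finset ι, LinearIndependent ℝ (fun i : ↥s => v ↑i) ∧
      ∃ t' : ι → ℝ, (∀ i, 0 ≤ t' i) ∧ (∀ i ∉ s, t' i = 0) ∧
        x = ∑ i, t' i • v i := by
  obtain ⟨t, ht, rfl⟩ := hx
  obtain ⟨s, h1, t', h2, h3, h4⟩ :=
    coneOf_caratheodory_aux v (Finset.univ.filter fun i => t i ≠ 0).card t le_rfl ht
  exact ⟨s, h1, t', h2, h3, h4.symm⟩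

end Cone

section Cone2sec
variable {E : Type*} [NormedAddCommGroup E] [NormedSpace ℝ E] [FiniteDimensional ℝ E]
variable {ι : Type*} [Fintype ι]

/-- The linear map sending coefficients supported on `s` to the corresponding combination. -/
def comboMap (v : ι → E) (s : Finset ι) : (↥s → ℝ) →ₗ[ℝ] E where
  toFun := fun t => ∑ i, t i • v ↑i
  map_add' := fun t t' => by simp [add_smul, Finset.sum_add_distrib]
  map_smul' := fun r t => by simp [Finset.smul_sum, mul_smul]

lemma coneOf_isClosed (v : ι → E) : IsClosed (coneOf v) := by
  classical
  have key : coneOf v = ⋃ s : Finset ι,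
      (if LinearIndependent ℝ (fun i : ↥s => v ↑i) then
        (comboMap v s) '' {t | ∀ i, 0 ≤ t i} else ∅) := by
    ext x
    constructor
    · intro hx
      obtain ⟨s, hs, t', h1, h2, h3⟩ := coneOf_caratheodory v hx
      refine Set.mem_iUnion.mpr ⟨s, ?_⟩
      rw [if_pos hs]
      refine ⟨fun i => t' ↑i, fun i => h1 ↑i, ?_⟩
      show (∑ i : ↥s, t' ↑i • v ↑i) = x
      rw [Finset.sum_coe_sort s (fun i => t' i • v i), h3]
      exact Finset.sum_subset (Finset.subset_univ s)
        (fun i _ hi => by rw [h2 i hi, zero_smul])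
    · intro hx
      obtain ⟨s, hs⟩ := Set.mem_iUnion.mp hx
      by_cases hind : LinearIndependent ℝ (fun i : ↥s => v ↑i)
      · rw [if_pos hind] at hs
        obtain ⟨t, ht, rfl⟩ := hs
        refine ⟨fun i => if h : i ∈ s then t ⟨i, h⟩ else 0, ?_, ?_⟩
        · intro i
          by_cases h : i ∈ s
          · simp only [dif_pos h]; exact ht _
          · simp [dif_neg h]
        · show comboMap v s t = _
          rw [show (∑ i, (if h : i ∈ s then t ⟨i, h⟩ else 0) • v i)
              = ∑ i ∈ s, (if h : i ∈ s then t ⟨i, h⟩ else 0) • v i from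
            (Finset.sum_subset (Finset.subset_univ s) (by intro i _ hi; simp [dif_neg hi])).symm]
          rw [← Finset.sum_coe_sort s]
          show comboMap v s t = ∑ i : ↥s, (if h : (i:ι) ∈ s then t ⟨i, h⟩ else 0) • v ↑i
          unfold comboMap
          simp only [LinearMap.coe_mk, AddHom.coe_mk]
          refine Finset.sum_congr rfl fun i _ => ?_
          rw [dif_pos i.2]
      · rw [if_neg hind] at hs; exact absurd hs (Set.notMem_empty x)
  rw [key]
  apply isClosed_iUnion_of_finite
  intro s
  split_ifs with hind
  · have hker : LinearMap.ker (comboMap v s) = ⊥ := by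
      rw [LinearMap.ker_eq_bot']
      intro t ht
      have := Fintype.linearIndependent_iff.mp hind t ht
      funext i; exact this i
    have hce := LinearMap.isClosedEmbedding_of_injective hker
    have hset : {t : ↥s → ℝ | ∀ i, 0 ≤ t i} = ⋂ i, {t : ↥s → ℝ | 0 ≤ t i} := by
      ext t; simp [Set.mem_iInter]
    refine hce.isClosedMap _ ?_
    rw [hset]
    exact isClosed_iInter fun i => isClosed_le continuous_const (continuous_apply i)
  · exact isClosed_empty

/-- Farkas-type separation: if `y` is not in the cone generated by the `v i`, there is a
continuous linear functional nonpositive on all `v i` and positive at `y`. -/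
lemma farkas_sep (v : ι → E) {y : E} (hy : y ∉ coneOf v) :
    ∃ f : E →L[ℝ] ℝ, (∀ i, f (v i) ≤ 0) ∧ 0 < f y := by
  classical
  obtain ⟨f, s, hfy, hfC⟩ :=
    geometric_hahn_banach_point_closed (coneOf_convex v) (coneOf_isClosed v) hy
  have hs0 : s < 0 := by
    have := hfC 0 (zero_mem_coneOf v)
    simpa using this
  have hfv : ∀ i, 0 ≤ f (v i) := by
    intro i
    by_contra h
    push_neg at h
    have hvC : v i ∈ coneOf v := by
      refine ⟨fun j => if j = i then 1 else 0, ?_, ?_⟩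
      · intro j; dsimp only; split_ifs <;> norm_num
      · simp
    have hmem := smul_mem_coneOf hvC (r := s / f (v i)) (div_nonneg_of_nonpos hs0.le h.le)
    have := hfC _ hmem
    rw [map_smul] at this
    simp only [smul_eq_mul] at this
    rw [div_mul_cancel₀] at this
    · exact lt_irrefl s this
    · exact h.ne
  refine ⟨-f, fun i => by simpa using neg_nonpos_of_nonneg (hfv i), ?_⟩
  have : f y < 0 := lt_trans hfy hs0
  simpa using neg_pos.mpr this

end Cone2sec

section Circuits

variable {n m : ℕ}

/-- `e` is conformal to `c` : wherever `e` is nonzero, it has the same sign as `c`. -/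
def Conf {m : ℕ} (e c : Fin m → ℝ) : Prop := ∀ i, e i = 0 ∨ 0 < e i * c i

lemma Conf.trans' {e g c : Fin m → ℝ} (h1 : Conf e g) (h2 : Conf g c) : Conf e c := by
  intro i
  rcases h1 i with h | h
  · exact Or.inl h
  · rcases h2 i with h' | h'
    · rw [h', mul_zero] at h; exact absurd h (lt_irrefl 0)
    · right
      rcases lt_trichotomy (g i) 0 with hg | hg | hg
      · have he : e i < 0 := by nlinarith
        have hc : c i < 0 := by nlinarith
        exact mul_pos_of_neg_of_neg he hc
      · rw [hg, mul_zero] at h; exact absurd h (lt_irrefl 0)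
      · have he : 0 < e i := by nlinarith
        have hc : 0 < c i := by nlinarith
        exact mul_pos he hc

lemma Conf.refl' (c : Fin m → ℝ) : Conf c c := by
  intro i
  rcases eq_or_ne (c i) 0 with h | h
  · exact Or.inl h
  · exact Or.inr (mul_self_pos.mpr h)

lemma Conf.subset_support {e c : Fin m → ℝ} (h : Conf e c) {i : Fin m} (hi : e i ≠ 0) :
    c i ≠ 0 := by
  rcases h i with h' | h'
  · exact absurd h' hi
  · intro hc; rw [hc, mul_zero] at h'; exact lt_irrefl 0 h'

variable (u : Fin m → Euc n)

/-- `c` is an elementary vector of the kernel: nonzero, in the kernel, of minimal support. -/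
def Elem (c : Fin m → ℝ) : Prop :=
  c ≠ 0 ∧ (∑ i, c i • u i) = 0 ∧
    ∀ d : Fin m → ℝ, (∑ i, d i • u i) = 0 → d ≠ 0 →
      {i | d i ≠ 0} ⊆ {i | c i ≠ 0} → {i | d i ≠ 0} = {i | c i ≠ 0}

lemma sum_subtype_support (C : Set (Fin m)) [Fintype ↥C] (c : Fin m → ℝ)
    (h : ∀ i, c i ≠ 0 → i ∈ C) :
    ∑ i : ↥C, c ↑i • u ↑i = ∑ i, c i • u i := by
  rw [Finset.sum_set_coe (f := fun i => c i • u i)]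
  refine Finset.sum_subset (Finset.subset_univ _) ?_
  intro i _ hi
  rw [Set.mem_toFinset] at hi
  rcases eq_or_ne (c i) 0 with h' | h'
  · rw [h', zero_smul]
  · exact absurd (h i h') hi

lemma elem_isCircuitVector {c : Fin m → ℝ} (hc : Elem u c) : IsCircuitVector u c := by
  classical
  obtain ⟨hne, hker, hmin⟩ := hc
  refine ⟨hker, ?_, ?_⟩
  · -- dependent
    haveI : Fintype ↥{i | c i ≠ 0} := Fintype.ofFinite _
    rw [Fintype.not_linearIndependent_iff]
    refine ⟨fun i => c ↑i, ?_, ?_⟩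
    · exact (sum_subtype_support u {i | c i ≠ 0} c (fun i hi => hi)).trans hker
    · obtain ⟨i, hi⟩ := Function.ne_iff.mp hne
      exact ⟨⟨i, hi⟩, hi⟩
  · -- proper subsets independent
    intro D hD
    by_contra hind
    haveI : Fintype ↥D := Fintype.ofFinite _
    obtain ⟨g, hg0, i₀, hi₀⟩ := Fintype.not_linearIndependent_iff.mp hind
    set d : Fin m → ℝ := fun i => if h : i ∈ D then g ⟨i, h⟩ else 0 with hdd
    have hd0 : ∀ i, d i ≠ 0 → i ∈ D := by
      intro i hi
      by_contra h
      simp [hdd, h] at hi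
    have hdsum : ∑ i, d i • u i = 0 := by
      rw [← sum_subtype_support u D d hd0]
      rw [Finset.sum_congr rfl (fun (i : ↥D) _ => show d ↑i • u ↑i = g i • u ↑i by
        simp [hdd, i.2])]
      exact hg0
    have hdne : d ≠ 0 := by
      intro h
      apply hi₀
      have := congrFun h ↑i₀
      simpa [hdd, i₀.2] using this
    have hsub : {i | d i ≠ 0} ⊆ {i | c i ≠ 0} := by
      intro i hi
      exact hD.1 (hd0 i hi)
    have heq := hmin d hdsum hdne hsub
    have h1 : {i | d i ≠ 0} ⊆ D := hd0
    rw [heq] at h1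
    exact hD.2 h1

end Circuits

section Decomp

variable {n m : ℕ} (u : Fin m → Euc n)

lemma conf_sub (c d : Fin m → ℝ) (t : ℝ) (ht : 0 < t)
    (h : ∀ i, d i ≠ 0 → c i * d i < 0 ∨ (0 < c i * d i ∧ t ≤ c i / d i)) :
    Conf (fun i => c i - t * d i) c := by
  intro i
  dsimp only
  rcases eq_or_ne (d i) 0 with hd | hd
  · rw [hd, mul_zero, sub_zero]
    rcases eq_or_ne (c i) 0 with h' | h'
    · exact Or.inl h'
    · exact Or.inr (mul_self_pos.mpr h')
  · rcases h i hd with hneg | ⟨hpos, hle⟩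
    · right
      have hc : c i ≠ 0 := by
        intro h0; rw [h0, zero_mul] at hneg; exact lt_irrefl 0 hneg
      have : (c i - t * d i) * c i = c i ^ 2 - t * (c i * d i) := by ring
      rw [this]
      nlinarith [sq_pos_of_ne_zero hc]
    · have hgi : c i - t * d i = d i * (c i / d i - t) := by
        field_simp
      rcases eq_or_ne (c i - t * d i) 0 with h0 | h0
      · exact Or.inl h0
      · right
        have hrt : c i / d i - t ≠ 0 := by
          intro h'
          rw [hgi, h', mul_zero] at h0
          exact h0 rfl
        have hrt' : 0 < c i / d i - t := lt_of_le_of_ne (by linarith) (Ne.symm hrt)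
        rw [hgi]
        have : d i * (c i / d i - t) * c i = (c i * d i) * (c i / d i - t) := by ring
        rw [this]
        exact mul_pos hpos hrt'

lemma exchange (c d : Fin m → ℝ) (hcker : ∑ i, c i • u i = 0)
    (hdker : ∑ i, d i • u i = 0) (hdne : d ≠ 0)
    (hsub : {i | d i ≠ 0} ⊆ {i | c i ≠ 0}) (hssub : {i | d i ≠ 0} ≠ {i | c i ≠ 0}) :
    ∃ g : Fin m → ℝ, (∑ i, g i • u i = 0) ∧ g ≠ 0 ∧ Conf g c ∧
      {i | g i ≠ 0} ⊂ {i | c i ≠ 0} := by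
  classical
  suffices key : ∀ d : Fin m → ℝ, (∑ i, d i • u i = 0) →
      {i | d i ≠ 0} ⊆ {i | c i ≠ 0} → {i | d i ≠ 0} ≠ {i | c i ≠ 0} →
      (∃ i, 0 < c i * d i) → ∃ g : Fin m → ℝ, (∑ i, g i • u i = 0) ∧ g ≠ 0 ∧ Conf g c ∧
      {i | g i ≠ 0} ⊂ {i | c i ≠ 0} by
    by_cases hpos : ∃ i, 0 < c i * d i
    · exact key d hdker hsub hssub hpos
    · refine key (fun i => -d i) ?_ ?_ ?_ ?_
      · simp only [neg_smul, Finset.sum_neg_distrib, hdker, neg_zero]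
      · simpa using hsub
      · simpa using hssub
      · obtain ⟨i, hi⟩ := Function.ne_iff.mp hdne
        refine ⟨i, ?_⟩
        have hci : c i ≠ 0 := hsub hi
        have : c i * d i ≠ 0 := mul_ne_zero hci hi
        push_neg at hpos
        have := lt_of_le_of_ne (hpos i) this
        nlinarith
  intro d hdker hsub hssub ⟨iP, hiP⟩
  set P : Finset (Fin m) := Finset.univ.filter fun i => 0 < c i * d i with hP
  have hPne : P.Nonempty := ⟨iP, by simp [hP, hiP]⟩
  obtain ⟨i₁, hi₁P, hi₁min⟩ := P.exists_min_image (fun i => c i / d i) hPne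
  have hprod : 0 < c i₁ * d i₁ := by simpa [hP] using hi₁P
  have hd₁ : d i₁ ≠ 0 := by rintro h; rw [h, mul_zero] at hprod; exact lt_irrefl 0 hprod
  have hc₁ : c i₁ ≠ 0 := by rintro h; rw [h, zero_mul] at hprod; exact lt_irrefl 0 hprod
  set t := c i₁ / d i₁ with hts
  have ht : 0 < t := by
    rcases mul_pos_iff.mp hprod with ⟨h1, h2⟩ | ⟨h1, h2⟩
    · exact div_pos h1 h2
    · exact div_pos_of_neg_of_neg h1 h2
  set g : Fin m → ℝ := fun i => c i - t * d i with hg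
  have hgker : ∑ i, g i • u i = 0 := by
    simp only [hg, sub_smul, Finset.sum_sub_distrib, mul_smul]
    rw [← Finset.smul_sum, hdker, smul_zero, sub_zero, hcker]
  have hconf : Conf g c := by
    refine conf_sub c d t ht ?_
    intro i hdi
    rcases lt_trichotomy (c i * d i) 0 with h | h | h
    · exact Or.inl h
    · have hci : c i ≠ 0 := hsub hdi
      exact absurd h (mul_ne_zero hci hdi)
    · refine Or.inr ⟨h, hi₁min i (by simp [hP, h])⟩
  have hgi₁ : g i₁ = 0 := by
    simp only [hg, hts]
    field_simp
    ring
  have hsubg : {i | g i ≠ 0} ⊆ {i | c i ≠ 0} := fun i hi => hconf.subset_support hi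
  obtain ⟨i₀, hi₀c, hi₀d⟩ := Set.exists_of_ssubset (ssubset_of_subset_of_ne hsub hssub)
  have hdi₀ : d i₀ = 0 := by simpa using hi₀d
  have hgi₀ : g i₀ ≠ 0 := by
    simp only [hg, hdi₀, mul_zero, sub_zero]
    exact hi₀c
  refine ⟨g, hgker, ?_, hconf, ?_⟩
  · exact Function.ne_iff.mpr ⟨i₀, hgi₀⟩
  · rw [Set.ssubset_iff_of_subset hsubg]
    exact ⟨i₁, hc₁, by simpa using hgi₁⟩

lemma exists_elem_conf : ∀ N : ℕ, ∀ c : Fin m → ℝ,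
    (Finset.univ.filter fun i => c i ≠ 0).card ≤ N → (∑ i, c i • u i = 0) → c ≠ 0 →
    ∃ e : Fin m → ℝ, Elem u e ∧ Conf e c := by
  classical
  intro N
  induction N with
  | zero =>
    intro c hcard hker hne
    exfalso
    obtain ⟨i, hi⟩ := Function.ne_iff.mp hne
    have hi' : c i ≠ 0 := hi
    have : i ∈ Finset.univ.filter fun i => c i ≠ 0 := by simp [hi']
    have := Finset.card_pos.mpr ⟨i, this⟩
    omega
  | succ N ih =>
    intro c hcard hker hne
    by_cases hel : Elem u c
    · exact ⟨c, hel, Conf.refl' c⟩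
    · have hex : ∃ d : Fin m → ℝ, (∑ i, d i • u i = 0) ∧ d ≠ 0 ∧
          {i | d i ≠ 0} ⊆ {i | c i ≠ 0} ∧ {i | d i ≠ 0} ≠ {i | c i ≠ 0} := by
        unfold Elem at hel
        push_neg at hel
        obtain ⟨d, h1, h2, h3, h4⟩ := hel hne hker
        exact ⟨d, h1, h2, h3, h4⟩
      obtain ⟨d, h1, h2, h3, h4⟩ := hex
      obtain ⟨g, hg1, hg2, hg3, hg4⟩ := exchange u c d hker h1 h2 h3 h4
      have hcards : (Finset.univ.filter fun i => g i ≠ 0).card ≤ N := by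
        have hlt : (Finset.univ.filter fun i => g i ≠ 0) ⊂
            (Finset.univ.filter fun i => c i ≠ 0) := by
          rw [← Finset.coe_ssubset]
          convert hg4 using 2 <;> simp [Finset.coe_filter]
        have := Finset.card_lt_card hlt
        omega
      obtain ⟨e, he1, he2⟩ := ih g hcards hg1 hg2
      exact ⟨e, he1, he2.trans' hg3⟩

end Decomp

section Decomp2
variable {n m : ℕ} (u : Fin m → Euc n)

lemma smul_circuitVector {c : Fin m → ℝ} {t : ℝ} (ht : t ≠ 0)
    (hc : IsCircuitVector u c) : IsCircuitVector u (fun i => t * c i) := by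
  obtain ⟨hker, hcirc⟩ := hc
  constructor
  · simp only [mul_smul]
    rw [← Finset.smul_sum, hker, smul_zero]
  · have : {i | t * c i ≠ 0} = {i | c i ≠ 0} := by
      ext i; simp [mul_ne_zero_iff, ht]
    rw [this]
    exact hcirc

lemma conformal_decomposition_aux : ∀ N : ℕ, ∀ c : Fin m → ℝ,
    (Finset.univ.filter fun i => c i ≠ 0).card ≤ N → (∑ i, c i • u i = 0) →
    ∃ (r : ℕ) (e : Fin r → Fin m → ℝ), (∀ t, IsCircuitVector u (e t)) ∧
      (∀ t, Conf (e t) c) ∧ (∀ i, c i = ∑ t, e t i) := by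
  classical
  intro N
  induction N with
  | zero =>
    intro c hcard hker
    have h0 : ∀ i, c i = 0 := by
      intro i
      by_contra hi
      have : i ∈ Finset.univ.filter fun i => c i ≠ 0 := by simp [hi]
      have := Finset.card_pos.mpr ⟨i, this⟩
      omega
    exact ⟨0, Fin.elim0, fun t => t.elim0, fun t => t.elim0, fun i => by simp [h0 i]⟩
  | succ N ih =>
    intro c hcard hker
    by_cases hne : c = 0
    · subst hne
      exact ⟨0, Fin.elim0, fun t => t.elim0, fun t => t.elim0, fun i => by simp⟩
    · obtain ⟨e₀, he₀, hconf₀⟩ :=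
        exists_elem_conf u ((Finset.univ.filter fun i => c i ≠ 0).card) c le_rfl hker hne
      set S : Finset (Fin m) := Finset.univ.filter fun i => e₀ i ≠ 0 with hS
      have hSne : S.Nonempty := by
        obtain ⟨i, hi⟩ := Function.ne_iff.mp he₀.1
        have hi' : e₀ i ≠ 0 := hi
        exact ⟨i, by simp [hS, hi']⟩
      obtain ⟨i₁, hi₁S, hi₁min⟩ := S.exists_min_image (fun i => c i / e₀ i) hSne
      have he₁ : e₀ i₁ ≠ 0 := by simpa [hS] using hi₁S
      have hprod : ∀ i, e₀ i ≠ 0 → 0 < e₀ i * c i := by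
        intro i hi
        rcases hconf₀ i with h | h
        · exact absurd h hi
        · exact h
      have hratio : ∀ i, e₀ i ≠ 0 → 0 < c i / e₀ i := by
        intro i hi
        rcases mul_pos_iff.mp (hprod i hi) with ⟨h1, h2⟩ | ⟨h1, h2⟩
        · exact div_pos h2 h1
        · exact div_pos_of_neg_of_neg h2 h1
      set lam := c i₁ / e₀ i₁ with hlam
      have hlam0 : 0 < lam := hratio i₁ he₁
      set c' : Fin m → ℝ := fun i => c i - lam * e₀ i with hc'
      have hc'ker : ∑ i, c' i • u i = 0 := by
        simp only [hc', sub_smul, Finset.sum_sub_distrib, mul_smul]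
        rw [← Finset.smul_sum, he₀.2.1, smul_zero, sub_zero, hker]
      have hconf' : Conf c' c := by
        refine conf_sub c e₀ lam hlam0 ?_
        intro i hi
        refine Or.inr ⟨?_, hi₁min i (by simp [hS, hi])⟩
        have := hprod i hi
        nlinarith
      have hc'i₁ : c' i₁ = 0 := by
        simp only [hc', hlam]
        field_simp
        ring
      have hci₁ : c i₁ ≠ 0 := by
        have := hprod i₁ he₁
        intro h; rw [h, mul_zero] at this; exact lt_irrefl 0 this
      have hcard' : (Finset.univ.filter fun i => c' i ≠ 0).card ≤ N := by
        have hsub : (Finset.univ.filter fun i => c' i ≠ 0) ⊆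
            (Finset.univ.filter fun i => c i ≠ 0).erase i₁ := by
          intro i hi
          simp only [Finset.mem_filter, Finset.mem_univ, true_and] at hi
          refine Finset.mem_erase.mpr ⟨?_, ?_⟩
          · rintro rfl; exact hi hc'i₁
          · simp only [Finset.mem_filter, Finset.mem_univ, true_and]
            exact hconf'.subset_support hi
        have h1 : ((Finset.univ.filter fun i => c i ≠ 0).erase i₁).card <
            (Finset.univ.filter fun i => c i ≠ 0).card :=
          Finset.card_erase_lt_of_mem (by simp [hci₁])
        have h2 := Finset.card_le_card hsub
        omega
      obtain ⟨r', e', h1', h2', h3'⟩ := ih c' hcard' hc'ker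
      refine ⟨r' + 1, Fin.cons (fun i => lam * e₀ i) e', ?_, ?_, ?_⟩
      · intro t
        refine Fin.cases ?_ ?_ t
        · exact smul_circuitVector u hlam0.ne' (elem_isCircuitVector u he₀)
        · intro t'; simpa using h1' t'
      · intro t
        refine Fin.cases ?_ ?_ t
        · intro i
          simp only [Fin.cons_zero]
          rcases hconf₀ i with h | h
          · exact Or.inl (by rw [h, mul_zero])
          · right
            have : lam * e₀ i * c i = lam * (e₀ i * c i) := by ring
            rw [this]
            exact mul_pos hlam0 h
        · intro t'
          simpa using (h2' t').trans' hconf'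
      · intro i
        have := h3' i
        simp only [hc'] at this
        simp only [Fin.sum_univ_succ, Fin.cons_zero, Fin.cons_succ]
        linarith

lemma conformal_decomposition {c : Fin m → ℝ} (hker : ∑ i, c i • u i = 0) :
    ∃ (r : ℕ) (e : Fin r → Fin m → ℝ), (∀ t, IsCircuitVector u (e t)) ∧
      (∀ t, Conf (e t) c) ∧ (∀ i, c i = ∑ t, e t i) :=
  conformal_decomposition_aux u _ c le_rfl hker

end Decomp2


section App

variable {n m : ℕ}

/-- An infeasibility certificate for the system defining `polyOpen u b I J K`. -/
def Cert (u : Fin m → Euc n) (b : Fin m → ℝ) (J K : Set (Fin m)) : Prop :=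
  ∃ c : Fin m → ℝ, (∑ i, c i • u i) = 0 ∧ (∀ j ∈ J, 0 ≤ c j) ∧ (∀ k ∈ K, c k ≤ 0) ∧
    dotm c b ≤ 0 ∧ (dotm c b < 0 ∨ ∃ l, (l ∈ J ∪ K) ∧ c l ≠ 0)

lemma not_cert_of_mem {u : Fin m → Euc n} {b : Fin m → ℝ} {I J K : Set (Fin m)}
    {x : Euc n} (hx : x ∈ polyOpen u b I J K) (hIJK : IsTripartition I J K) :
    ¬ Cert u b J K := by
  rintro ⟨c, hker, hJ, hK, hle, hstrict⟩
  obtain ⟨hxI, hxJ, hxK⟩ := hx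
  have tri : ∀ i, i ∈ I ∨ i ∈ J ∨ i ∈ K := by
    intro i
    have := hIJK.1
    rw [Set.eq_univ_iff_forall] at this
    have := this i
    simp only [Set.mem_union] at this
    tauto
  have hsum0 : ∑ i, c i * ⟪u i, x⟫ = 0 := by
    have h : ⟪(∑ i, c i • u i), x⟫ = (0:ℝ) := by rw [hker, inner_zero_left]
    rw [sum_inner] at h
    calc ∑ i, c i * ⟪u i, x⟫ = ∑ i, ⟪c i • u i, x⟫ :=
          Finset.sum_congr rfl fun i _ => (real_inner_smul_left _ _ _).symm
      _ = 0 := h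
  have hterm : ∀ i ∈ Finset.univ, c i * ⟪u i, x⟫ ≤ c i * b i := by
    intro i _
    rcases tri i with h | h | h
    · rw [hxI i h]
    · exact mul_le_mul_of_nonneg_left (le_of_lt (hxJ i h)) (hJ i h)
    · exact mul_le_mul_of_nonpos_left (le_of_lt (hxK i h)) (hK i h)
  have h0le : (0:ℝ) ≤ dotm c b := by
    rw [← hsum0]
    exact Finset.sum_le_sum hterm
  rcases hstrict with h | ⟨l, hl, hcl⟩
  · linarith
  · have hstrictl : c l * ⟪u l, x⟫ < c l * b l := by
      rcases Set.mem_union _ _ _ |>.mp hl with h | h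
      · have : 0 < c l := lt_of_le_of_ne (hJ l h) (Ne.symm hcl)
        exact mul_lt_mul_of_pos_left (hxJ l h) this
      · have : c l < 0 := lt_of_le_of_ne (hK l h) hcl
        exact mul_lt_mul_of_neg_left (hxK l h) this
    have : ∑ i, c i * ⟪u i, x⟫ < dotm c b :=
      Finset.sum_lt_sum hterm ⟨l, Finset.mem_univ l, hstrictl⟩
    rw [hsum0] at this
    linarith

set_option maxHeartbeats 1000000 in
lemma feasible_or_cert (u : Fin m → Euc n) (b : Fin m → ℝ) (I J K : Set (Fin m))
    (hIJK : IsTripartition I J K) :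
    (polyOpen u b I J K).Nonempty ∨ Cert u b J K := by
  classical
  obtain ⟨hU, hIJ, hIK, hJK⟩ := hIJK
  have tri : ∀ i : Fin m, i ∈ I ∨ i ∈ J ∨ i ∈ K := by
    intro i
    rw [Set.eq_univ_iff_forall] at hU
    have := hU i
    simp only [Set.mem_union] at this
    tauto
  set χ : Fin m → ℝ := fun i => if i ∈ J then 1 else if i ∈ K then -1 else 0 with hχ
  set g : Fin m → Euc n × ℝ × ℝ := fun i => (u i, b i, χ i) with hgdef
  set gen : (Fin m ⊕ Fin m) ⊕ Unit → Euc n × ℝ × ℝ := fun s =>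
    Sum.elim (Sum.elim (fun i => if i ∈ K then -g i else g i)
      (fun i => if i ∈ I then -g i else 0)) (fun _ => ((0:Euc n), (1:ℝ), (1:ℝ))) s with hgen
  set y : Euc n × ℝ × ℝ := ((0:Euc n), (0:ℝ), (1:ℝ)) with hydef
  by_cases hmem : y ∈ coneOf gen
  · -- certificate case
    right
    obtain ⟨t, ht, hsum⟩ := hmem
    set c : Fin m → ℝ := fun i => if i ∈ K then -(t (.inl (.inl i))) else
        if i ∈ I then t (.inl (.inl i)) - t (.inl (.inr i)) else t (.inl (.inl i)) with hc
    set ρ := t (.inr ()) with hρ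
    have hcomb : ∀ i, t (.inl (.inl i)) • gen (.inl (.inl i)) +
        t (.inl (.inr i)) • gen (.inl (.inr i)) = c i • g i := by
      intro i
      by_cases hiK : i ∈ K
      · have hiI : i ∉ I := Set.disjoint_right.mp hIK hiK
        simp only [hgen, hc, Sum.elim_inl, Sum.elim_inr, if_pos hiK, if_neg hiI,
          smul_zero, add_zero, smul_neg, neg_smul]
      · by_cases hiI : i ∈ I
        · simp only [hgen, hc, Sum.elim_inl, Sum.elim_inr, if_neg hiK, if_pos hiI,
            smul_neg, sub_smul]
          abel
        · simp only [hgen, hc, Sum.elim_inl, Sum.elim_inr, if_neg hiK, if_neg hiI,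
            smul_zero, add_zero]
    have hsum2 : y = ∑ i, c i • g i + ρ • ((0:Euc n), (1:ℝ), (1:ℝ)) := by
      rw [hsum, Fintype.sum_sum_type, Fintype.sum_sum_type]
      have hunit : ∑ s : Unit, t (Sum.inr s) • gen (Sum.inr s)
          = ρ • ((0:Euc n), (1:ℝ), (1:ℝ)) := by
        simp [hgen, hρ]
      rw [hunit, ← Finset.sum_add_distrib]
      congr 1
      exact Finset.sum_congr rfl fun i _ => hcomb i
    have hy1 := congrArg Prod.fst hsum2
    have hy2 := congrArg (fun z => z.2.1) hsum2
    have hy3 := congrArg (fun z => z.2.2) hsum2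
    simp only [hydef, Prod.fst_sum, Prod.fst_add, Prod.smul_fst, hgdef, smul_zero,
      add_zero] at hy1
    have h1 : ∑ i, c i • u i = 0 := hy1.symm
    simp only [hydef, Prod.snd_sum, Prod.fst_sum, Prod.snd_add, Prod.fst_add, Prod.smul_snd,
      Prod.smul_fst, hgdef, smul_eq_mul, mul_one] at hy2 hy3
    have h2 : ∑ i, c i * b i + ρ = 0 := hy2.symm
    have h3 : ∑ i, c i * χ i + ρ = 1 := hy3.symm
    have hcJ : ∀ j ∈ J, 0 ≤ c j := by
      intro j hj
      have hjK : j ∉ K := Set.disjoint_left.mp hJK hj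
      have hjI : j ∉ I := Set.disjoint_right.mp hIJ hj
      simp only [hc, if_neg hjK, if_neg hjI]
      exact ht _
    have hcK : ∀ k ∈ K, c k ≤ 0 := by
      intro k hk
      simp only [hc, if_pos hk]
      exact neg_nonpos_of_nonneg (ht _)
    have hρ0 : 0 ≤ ρ := ht _
    have hdb : dotm c b = -ρ := by
      unfold dotm; linarith
    refine ⟨c, h1, hcJ, hcK, by rw [hdb]; linarith, ?_⟩
    rcases lt_or_eq_of_le hρ0 with h | h
    · left; rw [hdb]; linarith
    · right
      have hχnonneg : ∀ i ∈ Finset.univ, 0 ≤ c i * χ i := by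
        intro i _
        rcases tri i with h' | h' | h'
        · have h1' : i ∉ J := Set.disjoint_left.mp hIJ h'
          have h2' : i ∉ K := Set.disjoint_left.mp hIK h'
          simp [hχ, h1', h2']
        · have h2' : i ∉ K := Set.disjoint_left.mp hJK h'
          simp only [hχ, if_pos h', mul_one]
          exact hcJ i h'
        · have h1' : i ∉ J := Set.disjoint_right.mp hJK h'
          simp only [hχ, if_neg h1', if_pos h', mul_neg_one]
          exact neg_nonneg.mpr (hcK i h')
      have hsumχ : ∑ i, c i * χ i = 1 := by rw [← h]  at h3; linarith
      have : ∃ l, c l * χ l ≠ 0 := by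
        by_contra hno
        push_neg at hno
        rw [Finset.sum_congr rfl (fun i _ => hno i)] at hsumχ
        simp at hsumχ
      obtain ⟨l, hl⟩ := this
      have hcl : c l ≠ 0 := fun h' => hl (by rw [h', zero_mul])
      have hχl : χ l ≠ 0 := fun h' => hl (by rw [h', mul_zero])
      refine ⟨l, ?_, hcl⟩
      rcases tri l with h' | h' | h'
      · exfalso
        apply hχl
        have h1' : l ∉ J := Set.disjoint_left.mp hIJ h'
        have h2' : l ∉ K := Set.disjoint_left.mp hIK h'
        simp [hχ, h1', h2']
      · exact Set.mem_union_left _ h'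
      · exact Set.mem_union_right _ h'
  · -- feasibility case
    left
    obtain ⟨f, hfle, hfy⟩ := farkas_sep gen hmem
    set σ := f ((0:Euc n), (0:ℝ), (1:ℝ)) with hσ
    set τ := f ((0:Euc n), (1:ℝ), (0:ℝ)) with hτ
    have hσpos : 0 < σ := hfy
    have hτσ : τ + σ ≤ 0 := by
      have := hfle (Sum.inr ())
      simp only [hgen, Sum.elim_inr] at this
      have hsplit : ((0:Euc n), (1:ℝ), (1:ℝ)) = ((0:Euc n), (1:ℝ), (0:ℝ)) +
          ((0:Euc n), (0:ℝ), (1:ℝ)) := by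
        simp
      rw [hsplit, map_add] at this
      linarith [this]
    have hτneg : τ < 0 := by linarith
    set φ : Euc n →L[ℝ] ℝ := f.comp (ContinuousLinearMap.inl ℝ (Euc n) (ℝ × ℝ)) with hφ
    set w : Euc n := (InnerProductSpace.toDual ℝ (Euc n)).symm φ with hw
    have hwv : ∀ v : Euc n, ⟪w, v⟫ = f (v, (0:ℝ), (0:ℝ)) := by
      intro v
      rw [hw, InnerProductSpace.toDual_symm_apply]
      rfl
    have hfval : ∀ (v : Euc n) (β γ : ℝ), f (v, β, γ) = ⟪w, v⟫ + β * τ + γ * σ := by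
      intro v β γ
      have hsplit : (v, β, γ) = (v, (0:ℝ), (0:ℝ)) + β • ((0:Euc n), (1:ℝ), (0:ℝ)) +
          γ • ((0:Euc n), (0:ℝ), (1:ℝ)) := by
        simp [Prod.ext_iff]
      rw [hsplit, map_add, map_add, map_smul, map_smul, hwv]
      simp [hσ, hτ]
    have hgenI : ∀ i ∈ I, ⟪w, u i⟫ + b i * τ = 0 := by
      intro i hi
      have hiJ : i ∉ J := Set.disjoint_left.mp hIJ hi
      have hiK : i ∉ K := Set.disjoint_left.mp hIK hi
      have hχi : χ i = 0 := by simp [hχ, hiJ, hiK]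
      have hle1 := hfle (Sum.inl (Sum.inl i))
      have hle2 := hfle (Sum.inl (Sum.inr i))
      simp only [hgen, Sum.elim_inl, Sum.elim_inr, if_pos hi, if_neg hiK] at hle1 hle2
      rw [hgdef] at hle1 hle2
      simp only [map_neg] at hle2
      rw [hfval] at hle1
      rw [hfval] at hle2
      rw [hχi] at hle1 hle2
      simp only [zero_mul, add_zero] at hle1 hle2
      linarith
    have hgenJ : ∀ j ∈ J, ⟪w, u j⟫ + b j * τ + σ ≤ 0 := by
      intro j hj
      have hjK : j ∉ K := Set.disjoint_left.mp hJK hj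
      have hχj : χ j = 1 := by simp [hχ, hj]
      have hle1 := hfle (Sum.inl (Sum.inl j))
      simp only [hgen, Sum.elim_inl, if_neg hjK] at hle1
      rw [hgdef] at hle1
      rw [hfval, hχj] at hle1
      simpa using hle1
    have hgenK : ∀ k ∈ K, 0 ≤ ⟪w, u k⟫ + b k * τ - σ := by
      intro k hk
      have hkJ : k ∉ J := Set.disjoint_right.mp hJK hk
      have hχk : χ k = -1 := by simp [hχ, hkJ, hk]
      have hle1 := hfle (Sum.inl (Sum.inl k))
      simp only [hgen, Sum.elim_inl, if_pos hk] at hle1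
      rw [hgdef] at hle1
      rw [map_neg, hfval, hχk] at hle1
      have : ⟪w, u k⟫ + b k * τ + (-1) * σ ≥ 0 := by linarith
      linarith
    refine ⟨(-τ)⁻¹ • w, ?_, ?_, ?_⟩
    · intro i hi
      have hval : ⟪u i, (-τ)⁻¹ • w⟫ = (-τ)⁻¹ * ⟪w, u i⟫ := by
        rw [real_inner_smul_right, real_inner_comm]
      rw [hval]
      have h1' := hgenI i hi
      have hτne : -τ ≠ 0 := by linarith
      have hkey : ⟪w, u i⟫ = (-τ) * b i := by linarith
      rw [hkey, inv_mul_cancel_left₀ hτne]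
    · intro j hj
      have hval : ⟪u j, (-τ)⁻¹ • w⟫ = (-τ)⁻¹ * ⟪w, u j⟫ := by
        rw [real_inner_smul_right, real_inner_comm]
      rw [hval]
      have h1' := hgenJ j hj
      have hpos : 0 < -τ := by linarith
      have hτne : -τ ≠ 0 := ne_of_gt hpos
      have hkey : ⟪w, u j⟫ < (-τ) * b j := by linarith
      calc (-τ)⁻¹ * ⟪w, u j⟫ < (-τ)⁻¹ * ((-τ) * b j) :=
            mul_lt_mul_of_pos_left hkey (inv_pos.mpr hpos)
        _ = b j := by rw [inv_mul_cancel_left₀ hτne]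
    · intro k hk
      have hval : ⟪u k, (-τ)⁻¹ • w⟫ = (-τ)⁻¹ * ⟪w, u k⟫ := by
        rw [real_inner_smul_right, real_inner_comm]
      rw [hval]
      have h1' := hgenK k hk
      have hpos : 0 < -τ := by linarith
      have hτne : -τ ≠ 0 := ne_of_gt hpos
      have hkey : (-τ) * b k < ⟪w, u k⟫ := by linarith
      calc b k = (-τ)⁻¹ * ((-τ) * b k) := by rw [inv_mul_cancel_left₀ hτne]
        _ < (-τ)⁻¹ * ⟪w, u k⟫ := mul_lt_mul_of_pos_left hkey (inv_pos.mpr hpos)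

end App

end Aux

theorem polyOpen_nonempty_of_sameOpenFace {n m : ℕ} (hn : 1 ≤ n) (hm : 1 ≤ m)
    (u : Fin m → Euc n) (hu : ∀ i, u i ≠ 0)
    (a b : Fin m → ℝ) (hab : SameOpenFace u a b)
    (I J K : Set (Fin m)) (hIJK : IsTripartition I J K)
    (hne : (polyOpen u a I J K).Nonempty) :
    (polyOpen u b I J K).Nonempty := by
  classical
  rcases feasible_or_cert u b I J K hIJK with h | hcert
  · exact h
  · exfalso
    obtain ⟨x, hx⟩ := hne
    obtain ⟨c, hker, hJ, hK, hle, hstrict⟩ := hcert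
    obtain ⟨r, e, hcv, hconf, hdecomp⟩ := conformal_decomposition u hker
    have heJ : ∀ t, ∀ j ∈ J, 0 ≤ e t j := by
      intro t j hj
      rcases hconf t j with h | h
      · rw [h]
      · have hcj : c j ≠ 0 := fun h0 => by rw [h0, mul_zero] at h; exact lt_irrefl 0 h
        have : 0 < c j := lt_of_le_of_ne (hJ j hj) (Ne.symm hcj)
        nlinarith
    have heK : ∀ t, ∀ k ∈ K, e t k ≤ 0 := by
      intro t k hk
      rcases hconf t k with h | h
      · rw [h]
      · have hck : c k ≠ 0 := fun h0 => by rw [h0, mul_zero] at h; exact lt_irrefl 0 h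
        have : c k < 0 := lt_of_le_of_ne (hK k hk) hck
        nlinarith
    have hsplit : dotm c b = ∑ t, dotm (e t) b := by
      unfold dotm
      calc ∑ i, c i * b i = ∑ i, ∑ t, e t i * b i := by
            refine Finset.sum_congr rfl fun i _ => ?_
            rw [hdecomp i, Finset.sum_mul]
        _ = ∑ t, ∑ i, e t i * b i := Finset.sum_comm
    have certA : Cert u a J K := by
      have transfer : ∀ t, SignType.sign (dotm (e t) a) = SignType.sign (dotm (e t) b) :=
        fun t => hab (e t) (hcv t)
      by_cases hneg : ∃ t, dotm (e t) b < 0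
      · obtain ⟨t, ht⟩ := hneg
        have ha : dotm (e t) a < 0 := by
          have h' := transfer t
          rw [sign_eq_neg_one_iff.mpr ht] at h'
          exact sign_eq_neg_one_iff.mp h'
        exact ⟨e t, (hcv t).1, heJ t, heK t, le_of_lt ha, Or.inl ha⟩
      · push_neg at hneg
        have hall0 : ∀ t ∈ Finset.univ, dotm (e t) b = 0 := by
          have hsum0 : ∑ t, dotm (e t) b = 0 := by
            have h1 : dotm c b = 0 := le_antisymm hle (by
              rw [hsplit]; exact Finset.sum_nonneg fun t _ => hneg t)
            rw [← hsplit, h1]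
          exact (Finset.sum_eq_zero_iff_of_nonneg (fun t _ => hneg t)).mp hsum0
        have hl : ∃ l, l ∈ J ∪ K ∧ c l ≠ 0 := by
          rcases hstrict with h | h
          · exfalso
            rw [hsplit] at h
            have := Finset.sum_nonneg (fun t (_ : t ∈ Finset.univ) => hneg t)
            linarith
          · exact h
        obtain ⟨l, hlJK, hcl⟩ := hl
        have hex : ∃ t, e t l ≠ 0 := by
          by_contra hno
          push_neg at hno
          apply hcl
          rw [hdecomp l]
          exact Finset.sum_eq_zero fun t _ => hno t
        obtain ⟨t, hetl⟩ := hex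
        have ha0 : dotm (e t) a = 0 := by
          have h' := transfer t
          rw [sign_eq_zero_iff.mpr (hall0 t (Finset.mem_univ t))] at h'
          exact sign_eq_zero_iff.mp h'
        exact ⟨e t, (hcv t).1, heJ t, heK t, le_of_eq ha0, Or.inr ⟨l, hlJK, hetl⟩⟩
    exact not_cert_of_mem hx hIJK certA
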